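/- arXiv:2205.15146 — 5 statements merged into one kernel-verified Lean document; each statement's English description precedes it below -/
import Mathlib

section
/- Let n ≥ 2 and let x ∈ ℝⁿ be non-constant. Then the standardization map y is Fréchet differentiable at x, and its Jacobian matrix J(x) = ∂y(x)ᵀ/∂x satisfies J(x) = (1/σ(x)) · ( Iₙ − (1/n)·1ₙ1ₙᵀ − (1/(n·σ(x)²))·(x − μ(x)1ₙ)(x − μ(x)1ₙ)ᵀ ). -/
open scoped BigOperators

/-- Mini-batch mean of a feature dimension across `n` samples. -/
noncomputable def bmean {n : ℕ} (x : Fin n → ℝ) : ℝ := (∑ i, x i) / n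

/-- Mini-batch standard deviation of a feature dimension across `n` samples. -/
noncomputable def bstd {n : ℕ} (x : Fin n → ℝ) : ℝ :=
  Real.sqrt ((∑ i, (x i - bmean x) ^ 2) / n)

/-- `x` is non-constant: it differs from the constant vector of its mean. -/
def NonConstant {n : ℕ} (x : Fin n → ℝ) : Prop := x ≠ fun _ => bmean x

/-- The batch-normalization standardization phase (with ε = 0). -/
noncomputable def standardize {n : ℕ} (x : Fin n → ℝ) : Fin n → ℝ :=
  fun i => (x i - bmean x) / bstd x

/-- The claimed Jacobian matrix of the standardization map. -/
noncomputable def bnJacobian {n : ℕ} (x : Fin n → ℝ) : Matrix (Fin n) (Fin n) ℝ :=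
  fun i j => (1 / bstd x) *
    ((if i = j then (1 : ℝ) else 0) - 1 / (n : ℝ)
      - (x i - bmean x) * (x j - bmean x) / ((n : ℝ) * bstd x ^ 2))

/-- for `n ≥ 2` and non-constant `x`, the standardization map is Fréchet
differentiable at `x` and its Jacobian is
`(1/σ(x)) (I − (1/n) 1 1ᵀ − (1/(n σ(x)²)) (x − μ(x)1)(x − μ(x)1)ᵀ)`. -/
theorem bn_jacobian_formula (n : ℕ) (hn : 2 ≤ n) (x : Fin n → ℝ) (hx : NonConstant x) :
    HasFDerivAt (standardize (n := n))
      (LinearMap.toContinuousLinearMap (Matrix.toLin' (bnJacobian x))) x := by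
  have hn0 : (0:ℝ) < n := by
    have : 0 < n := lt_of_lt_of_le (by norm_num) hn
    exact_mod_cast this
  have hvpos : 0 < (∑ i, (x i - bmean x) ^ 2) / n := by
    apply div_pos _ hn0
    obtain ⟨i, hi⟩ : ∃ i, x i ≠ bmean x := by
      by_contra h; push_neg at h; exact hx (funext h)
    refine Finset.sum_pos' (fun j _ => sq_nonneg _) ⟨i, Finset.mem_univ i, ?_⟩
    have : x i - bmean x ≠ 0 := sub_ne_zero.mpr hi
    positivity
  have hs : 0 < bstd x := Real.sqrt_pos.mpr hvpos
  have hs2 : bstd x ^ 2 = (∑ i, (x i - bmean x) ^ 2) / n := Real.sq_sqrt hvpos.le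
  set M : (Fin n → ℝ) →L[ℝ] ℝ := (n:ℝ)⁻¹ • (∑ i, ContinuousLinearMap.proj i) with hM
  have hmean : HasFDerivAt (bmean (n := n)) M x := by
    have h1 : HasFDerivAt (fun z : Fin n → ℝ => ∑ i, z i)
        ((∑ i, ContinuousLinearMap.proj i : (Fin n → ℝ) →L[ℝ] ℝ)) x := by
      have : (fun z : Fin n → ℝ => ∑ i, z i) = fun z => ∑ i, (fun w : Fin n → ℝ => w i) z := rfl
      rw [this]
      exact HasFDerivAt.fun_sum fun i _ => hasFDerivAt_apply (𝕜 := ℝ) i x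
    have h2 := h1.const_mul ((n:ℝ)⁻¹)
    show HasFDerivAt (fun y : Fin n → ℝ => (∑ i, y i) / n) M x
    simpa [hM, div_eq_inv_mul] using h2
  have hdev : ∀ i : Fin n, HasFDerivAt (fun y : Fin n → ℝ => y i - bmean y)
      (ContinuousLinearMap.proj i - M) x :=
    fun i => (hasFDerivAt_apply (𝕜 := ℝ) i x).sub hmean
  set V : (Fin n → ℝ) →L[ℝ] ℝ :=
    (n:ℝ)⁻¹ • ∑ i, ((2 : ℝ) * (x i - bmean x)) • (ContinuousLinearMap.proj i - M) with hV
  have hsq : ∀ i : Fin n, HasFDerivAt (fun y : Fin n → ℝ => (y i - bmean y) ^ 2)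
      (((2 : ℝ) * (x i - bmean x)) • (ContinuousLinearMap.proj i - M)) x := by
    intro i
    have := (hdev i).fun_mul (hdev i)
    simpa [pow_two, two_mul, add_smul] using this
  have hsumsq : HasFDerivAt (fun y : Fin n → ℝ => ∑ i, (y i - bmean y) ^ 2)
      (∑ i, ((2 : ℝ) * (x i - bmean x)) • (ContinuousLinearMap.proj i - M)) x :=
    HasFDerivAt.fun_sum fun i _ => hsq i
  have hvar : HasFDerivAt (fun y : Fin n → ℝ => (∑ i, (y i - bmean y) ^ 2) / n) V x := by
    have h2 := hsumsq.const_mul ((n:ℝ)⁻¹)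
    simpa [div_eq_inv_mul, hV] using h2
  have hstd : HasFDerivAt (bstd (n := n)) ((1 / (2 * bstd x)) • V) x :=
    hvar.sqrt hvpos.ne'
  have hinv : HasFDerivAt (fun y : Fin n → ℝ => (bstd y)⁻¹)
      (-((bstd x ^ 2)⁻¹ • ((1 / (2 * bstd x)) • V))) x := by
    have h := (hasDerivAt_inv hs.ne').comp_hasFDerivAt x hstd
    simpa [Function.comp_def] using h
  rw [hasFDerivAt_pi']
  intro i
  have hcomp : HasFDerivAt (fun y : Fin n → ℝ => (y i - bmean y) * (bstd y)⁻¹)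
      ((x i - bmean x) • (-((bstd x ^ 2)⁻¹ • ((1 / (2 * bstd x)) • V)))
        + (bstd x)⁻¹ • (ContinuousLinearMap.proj i - M)) x := (hdev i).mul hinv
  have heq : (fun y : Fin n → ℝ => (y i - bmean y) * (bstd y)⁻¹)
      = fun y => standardize y i := by
    funext y; simp [standardize, div_eq_mul_inv]
  rw [heq] at hcomp
  refine hcomp.congr_fderiv (Eq.symm ?_)
  apply ContinuousLinearMap.coe_injective
  apply Module.Basis.ext (Pi.basisFun ℝ (Fin n))
  intro j
  have hsum0 : ∑ k, (x k - bmean x) = 0 := by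
    have h1 : (∑ k, x k) = n * bmean x := by
      rw [bmean]; field_simp
    simp [Finset.sum_sub_distrib, h1, mul_comm]
  have hMj : M (Pi.single j 1) = 1 / (n:ℝ) := by
    simp [hM, ContinuousLinearMap.sum_apply, Pi.single_apply,
      Finset.sum_ite_eq', one_div]
  have hVj : V (Pi.single j 1) = 2 * (x j - bmean x) / n := by
    simp only [hV, ContinuousLinearMap.smul_apply, ContinuousLinearMap.sum_apply,
      ContinuousLinearMap.sub_apply, ContinuousLinearMap.proj_apply, hMj,
      Pi.single_apply, smul_eq_mul]
    have hc : ∑ k, (2 * (x k - bmean x)) * ((if k = j then (1:ℝ) else 0) - 1 / n)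
        = 2 * (x j - bmean x) := by
      calc ∑ k, (2 * (x k - bmean x)) * ((if k = j then (1:ℝ) else 0) - 1 / n)
          = ∑ k, ((if k = j then 2 * (x k - bmean x) else 0)
              - (x k - bmean x) * (2 / n)) := by
            refine Finset.sum_congr rfl fun k _ => ?_
            by_cases h : k = j <;> simp [h] <;> ring
        _ = 2 * (x j - bmean x) - (∑ k, (x k - bmean x)) * (2 / n) := by
            rw [Finset.sum_sub_distrib, Finset.sum_ite_eq', ← Finset.sum_mul]
            simp
        _ = 2 * (x j - bmean x) := by rw [hsum0]; ring
    rw [hc]; ring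
  have hLHS : ((ContinuousLinearMap.proj i).comp
      (LinearMap.toContinuousLinearMap (Matrix.toLin' (bnJacobian x)))) (Pi.single j 1)
      = bnJacobian x i j := by
    simp [Matrix.toLin'_apply, Matrix.mulVec, dotProduct, Pi.single_apply,
      mul_ite, Finset.sum_ite_eq']
  simp only [Pi.basisFun_apply, ContinuousLinearMap.coe_coe]
  rw [hLHS]
  simp only [ContinuousLinearMap.add_apply, ContinuousLinearMap.smul_apply,
    ContinuousLinearMap.neg_apply, ContinuousLinearMap.sub_apply,
    ContinuousLinearMap.proj_apply, hVj, hMj, Pi.single_apply, smul_eq_mul]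
  rw [bnJacobian]
  have hsne : bstd x ≠ 0 := hs.ne'
  have hnne : (n:ℝ) ≠ 0 := hn0.ne'
  field_simp
  ring
end

section
/- (Theorem 1) Let D ≥ 1, n ≥ 2, fix g ∈ ℝ^D and ỹ ∈ ℝ^D, and let X ∈ ℝ^{D×n} have all rows non-constant. Define the first-order Taylor loss term Loss^grad(X) = Σ_{i=1}^n (y^{(i)} − ỹ)ᵀ g, where y^{(i)} is the i-th column of the row-wise standardization Y(X). Then the Fréchet derivative of Loss^grad with respect to X vanishes at X: ∂Loss^grad/∂X = 0. In particular, the first derivatives g of the loss at the expansion point ỹ cannot pass their influence through the batch-normalization standardization phase. -/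
open scoped BigOperators

lemma sum_standardize_eq_zero {n : ℕ} (x : Fin n → ℝ) :
    ∑ i, standardize x i = 0 := by
  unfold standardize
  rw [← Finset.sum_div]
  have : ∑ i, (x i - bmean x) = 0 := by
    rcases Nat.eq_zero_or_pos n with h | h
    · subst h; simp
    · have hn : (n : ℝ) ≠ 0 := Nat.cast_ne_zero.mpr h.ne'
      simp only [Finset.sum_sub_distrib, bmean, Finset.sum_const,
        Finset.card_univ, Fintype.card_fin, nsmul_eq_mul]
      field_simp
      ring
  simp [this]

/-- Theorem 1: the first-order Taylor loss term
`Loss^grad(X) = Σᵢ (y⁽ⁱ⁾ − ỹ)ᵀ g` (where `y⁽ⁱ⁾` is the `i`-th column of the row-wise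
standardization of `X`) has vanishing Fréchet derivative with respect to `X`. -/
theorem loss_grad_fderiv_zero (D n : ℕ) (hD : 1 ≤ D) (hn : 2 ≤ n)
    (g ytil : Fin D → ℝ) (X : Fin D → Fin n → ℝ) (hX : ∀ d, NonConstant (X d)) :
    HasFDerivAt
      (fun Z : Fin D → Fin n → ℝ => ∑ i, ∑ d, (standardize (Z d) i - ytil d) * g d)
      (0 : (Fin D → Fin n → ℝ) →L[ℝ] ℝ) X := by
  have key : (fun Z : Fin D → Fin n → ℝ =>
      ∑ i, ∑ d, (standardize (Z d) i - ytil d) * g d)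
      = fun _ => ∑ d, (0 - (n : ℝ) * ytil d) * g d := by
    funext Z
    rw [Finset.sum_comm]
    refine Finset.sum_congr rfl fun d _ => ?_
    rw [← Finset.sum_mul, Finset.sum_sub_distrib, sum_standardize_eq_zero,
      Finset.sum_const]
    simp [mul_comm]
  rw [key]
  exact hasFDerivAt_const _ _
end

section
/- (Theorem 2) Let D ≥ 1, n ≥ 2, fix a diagonal matrix H^diag ∈ ℝ^{D×D} and ỹ ∈ ℝ^D, and let X ∈ ℝ^{D×n} have all rows non-constant. Define Loss^diag(X) = (1/2)Σ_{i=1}^n (y^{(i)} − ỹ)ᵀ H^diag (y^{(i)} − ỹ), where y^{(i)} is the i-th column of the row-wise standardization Y(X). Then the Fréchet derivative of Loss^diag with respect to X vanishes at X: ∂Loss^diag/∂X = 0. In particular, the diagonal elements of the Hessian of the loss at the expansion point ỹ cannot pass their influence through the batch-normalization standardization phase. -/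
open scoped BigOperators

lemma nonConstant_iff_sumsq_pos {n : ℕ} (x : Fin n → ℝ) :
    NonConstant x ↔ 0 < ∑ i, (x i - bmean x) ^ 2 := by
  constructor
  · intro hx
    rcases lt_or_eq_of_le (Finset.sum_nonneg fun i _ => sq_nonneg (x i - bmean x)) with h | h
    · exact h
    · exfalso
      apply hx
      funext i
      have h0 : (x i - bmean x) ^ 2 = 0 :=
        (Finset.sum_eq_zero_iff_of_nonneg fun i _ => sq_nonneg _).mp h.symm i (Finset.mem_univ i)
      have := pow_eq_zero_iff (n := 2) (by norm_num) |>.mp h0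
      simpa using sub_eq_zero.mp this
  · intro hpos hx
    rw [hx] at hpos
    have hz : ∑ i : Fin n, ((fun _ => bmean x) i - bmean (fun _ : Fin n => bmean x)) ^ 2 = 0 := by
      rcases Nat.eq_zero_or_pos n with h | h
      · subst h; simp
      · have hm : bmean (fun _ : Fin n => bmean x) = bmean x := by
          have hn' : (n : ℝ) ≠ 0 := by exact_mod_cast h.ne'
          simp [bmean, Finset.sum_const, Finset.card_univ]
          field_simp
        simp [hm]
    linarith

lemma bstd_pos {n : ℕ} (hn : 0 < n) (x : Fin n → ℝ) (hx : NonConstant x) :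
    0 < bstd x := by
  apply Real.sqrt_pos.mpr
  apply div_pos ((nonConstant_iff_sumsq_pos x).mp hx)
  exact_mod_cast hn

lemma sum_standardize {n : ℕ} (hn : 0 < n) (x : Fin n → ℝ) (hx : NonConstant x) :
    ∑ i, standardize x i = 0 := by
  have hs := bstd_pos hn x hx
  have hsum : ∑ i, (x i - bmean x) = 0 := by
    have hn' : (n : ℝ) ≠ 0 := by exact_mod_cast hn.ne'
    simp [Finset.sum_sub_distrib, bmean]
    field_simp
    ring
  unfold standardize
  rw [← Finset.sum_div, hsum, zero_div]

lemma sum_standardize_sq {n : ℕ} (hn : 0 < n) (x : Fin n → ℝ) (hx : NonConstant x) :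
    ∑ i, (standardize x i) ^ 2 = n := by
  have hs := bstd_pos hn x hx
  have harg : (0:ℝ) ≤ (∑ i, (x i - bmean x) ^ 2) / n := by
    apply div_nonneg (Finset.sum_nonneg fun i _ => sq_nonneg _)
    positivity
  have hsq : bstd x ^ 2 = (∑ i, (x i - bmean x) ^ 2) / n := Real.sq_sqrt harg
  have hn' : (n : ℝ) ≠ 0 := by exact_mod_cast hn.ne'
  have hssum : (0:ℝ) < ∑ i, (x i - bmean x) ^ 2 :=
    (nonConstant_iff_sumsq_pos x).mp hx
  unfold standardize
  simp only [div_pow]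
  rw [← Finset.sum_div, hsq]
  field_simp

/-- On non-constant rows the diagonal loss takes a constant value. -/
lemma loss_diag_const (D n : ℕ) (hn : 0 < n)
    (Hdiag : Matrix (Fin D) (Fin D) ℝ) (hHdiag : Hdiag.IsDiag)
    (ytil : Fin D → ℝ) (Z : Fin D → Fin n → ℝ) (hZ : ∀ d, NonConstant (Z d)) :
    (1 / 2 : ℝ) * ∑ i, ∑ j, ∑ k,
        (standardize (Z j) i - ytil j) * Hdiag j k * (standardize (Z k) i - ytil k)
      = (1 / 2 : ℝ) * ∑ j, Hdiag j j * (n + n * ytil j ^ 2) := by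
  congr 1
  have hdiag : ∀ i : Fin n, ∀ j : Fin D,
      (∑ k, (standardize (Z j) i - ytil j) * Hdiag j k * (standardize (Z k) i - ytil k))
        = (standardize (Z j) i - ytil j) ^ 2 * Hdiag j j := by
    intro i j
    rw [Finset.sum_eq_single j]
    · ring
    · intro k _ hk
      rw [hHdiag (Ne.symm hk)]
      ring
    · simp
  calc ∑ i, ∑ j, ∑ k,
        (standardize (Z j) i - ytil j) * Hdiag j k * (standardize (Z k) i - ytil k)
      = ∑ i, ∑ j, (standardize (Z j) i - ytil j) ^ 2 * Hdiag j j := by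
        refine Finset.sum_congr rfl fun i _ => Finset.sum_congr rfl fun j _ => hdiag i j
    _ = ∑ j, ∑ i, (standardize (Z j) i - ytil j) ^ 2 * Hdiag j j := Finset.sum_comm
    _ = ∑ j, Hdiag j j * (n + n * ytil j ^ 2) := by
        refine Finset.sum_congr rfl fun j _ => ?_
        have h1 := sum_standardize hn (Z j) (hZ j)
        have h2 := sum_standardize_sq hn (Z j) (hZ j)
        rw [← Finset.sum_mul]
        have hexp : ∑ i, (standardize (Z j) i - ytil j) ^ 2
            = (n : ℝ) + n * ytil j ^ 2 := by
          have e : ∑ i, (standardize (Z j) i - ytil j) ^ 2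
              = ∑ i, (standardize (Z j) i ^ 2
                  - 2 * ytil j * standardize (Z j) i + ytil j ^ 2) :=
            Finset.sum_congr rfl fun i _ => by ring
          rw [e, Finset.sum_add_distrib, Finset.sum_sub_distrib, ← Finset.mul_sum, h1, h2]
          simp [Finset.sum_const, Finset.card_univ]
        rw [hexp]
        ring

/-- Theorem 2: the diagonal second-order Taylor loss term
`Loss^diag(X) = (1/2) Σᵢ (y⁽ⁱ⁾ − ỹ)ᵀ H^diag (y⁽ⁱ⁾ − ỹ)` has vanishing Fréchet derivative
with respect to `X`, for any diagonal matrix `H^diag`. -/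
theorem loss_diag_fderiv_zero (D n : ℕ) (hD : 1 ≤ D) (hn : 2 ≤ n)
    (Hdiag : Matrix (Fin D) (Fin D) ℝ) (hHdiag : Hdiag.IsDiag)
    (ytil : Fin D → ℝ) (X : Fin D → Fin n → ℝ) (hX : ∀ d, NonConstant (X d)) :
    HasFDerivAt
      (fun Z : Fin D → Fin n → ℝ =>
        (1 / 2 : ℝ) * ∑ i, ∑ j, ∑ k,
          (standardize (Z j) i - ytil j) * Hdiag j k * (standardize (Z k) i - ytil k))
      (0 : (Fin D → Fin n → ℝ) →L[ℝ] ℝ) X := by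
  have hn0 : 0 < n := by omega
  set c : ℝ := (1 / 2 : ℝ) * ∑ j, Hdiag j j * (n + n * ytil j ^ 2) with hc
  have hconst : HasFDerivAt (fun _ : Fin D → Fin n → ℝ => c)
      (0 : (Fin D → Fin n → ℝ) →L[ℝ] ℝ) X := hasFDerivAt_const c X
  refine hconst.congr_of_eventuallyEq ?_
  -- the set of matrices with all rows non-constant is open
  have hopen : IsOpen {Z : Fin D → Fin n → ℝ | ∀ d, NonConstant (Z d)} := by
    have : {Z : Fin D → Fin n → ℝ | ∀ d, NonConstant (Z d)}
        = ⋂ d, {Z : Fin D → Fin n → ℝ | 0 < ∑ i, (Z d i - bmean (Z d)) ^ 2} := by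
      ext Z
      simp only [Set.mem_setOf_eq, Set.mem_iInter]
      exact forall_congr' fun d => nonConstant_iff_sumsq_pos (Z d)
    rw [this]
    apply isOpen_iInter_of_finite
    intro d
    have hcont : Continuous fun Z : Fin D → Fin n → ℝ =>
        ∑ i, (Z d i - bmean (Z d)) ^ 2 := by
      unfold bmean
      fun_prop
    exact isOpen_lt continuous_const hcont
  have hmem : {Z : Fin D → Fin n → ℝ | ∀ d, NonConstant (Z d)} ∈ nhds X :=
    hopen.mem_nhds hX
  filter_upwards [hmem] with Z hZ
  exact loss_diag_const D n hn0 Hdiag hHdiag ytil Z hZ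
end

section
/- (Theorem 3, gradient of the off-diagonal interaction term) Let n ≥ 2, D ≥ 1, and fix d ∈ {1,…,D}. Let x ∈ ℝⁿ be non-constant with standardized output y_d := y(x) and o_d = y_d/‖y_d‖. Let y_j ∈ ℝⁿ for j ≠ d be fixed vectors satisfying 1ₙᵀ y_j = 0, let h ∈ ℝ^D with h_d = 0, and let ỹ ∈ ℝ^D. Then the function x ↦ Σ_{j=1}^D h_j (y_j − ỹ_j 1ₙ)ᵀ y(x) is differentiable at x, and its gradient equals (1/σ(x)) · Σ_{j=1}^D h_j (y_j − ⟨o_d, y_j⟩ o_d). In particular, only the components of the y_j that are not linearly correlated with y_d contribute to the back-propagated gradient. -/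
open scoped BigOperators

/-- Theorem 3, gradient of the off-diagonal interaction term: with
`y_d = y(x)`, `o_d = y_d/‖y_d‖`, fixed zero-mean vectors `yⱼ` (j ≠ d) and coefficients
`h` with `h_d = 0`, the map `x ↦ Σⱼ hⱼ (yⱼ − ỹⱼ1ₙ)ᵀ y(x)` is differentiable at `x`
with gradient `(1/σ(x)) Σⱼ hⱼ (yⱼ − ⟨o_d, yⱼ⟩ o_d)`. -/
theorem loss_off_non_gradient (n D : ℕ) (hn : 2 ≤ n) (hD : 1 ≤ D) (d : Fin D)
    (x : Fin n → ℝ) (hx : NonConstant x)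
    (ys : Fin D → Fin n → ℝ) (hys : ∀ j, j ≠ d → ∑ i, ys j i = 0)
    (h : Fin D → ℝ) (hhd : h d = 0) (ytil : Fin D → ℝ) :
    let yd : Fin n → ℝ := standardize x
    let nrm : ℝ := Real.sqrt (∑ i, yd i ^ 2)
    let o : Fin n → ℝ := nrm⁻¹ • yd
    ∃ L : (Fin n → ℝ) →L[ℝ] ℝ,
      HasFDerivAt
        (fun v : Fin n → ℝ =>
          ∑ j, h j * ∑ i, (ys j i - ytil j) * standardize v i) L x ∧
      ∀ w : Fin n → ℝ,
        L w = ∑ i,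
          ((1 / bstd x) * ∑ j, h j * (ys j i - (∑ k, o k * ys j k) * o i)) * w i := by
  intro yd nrm o
  have hn0 : (n : ℝ) ≠ 0 := Nat.cast_ne_zero.mpr (by omega)
  have hnpos : (0:ℝ) < n := Nat.cast_pos.mpr (by omega)
  -- positivity of the variance
  have hxne : ∃ i, x i ≠ bmean x := by
    by_contra h'
    push_neg at h'
    exact hx (funext h')
  have hqpos : 0 < (∑ i, (x i - bmean x) ^ 2) / n := by
    apply div_pos _ hnpos
    obtain ⟨i, hi⟩ := hxne
    refine Finset.sum_pos' (fun j _ => sq_nonneg _) ⟨i, Finset.mem_univ i, ?_⟩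
    have h2 : x i - bmean x ≠ 0 := sub_ne_zero.mpr hi
    positivity
  have hσpos : 0 < bstd x := Real.sqrt_pos.mpr hqpos
  have hσ0 : bstd x ≠ 0 := ne_of_gt hσpos
  -- the coefficient vector
  set c : Fin n → ℝ := fun i => ∑ j, h j * (ys j i - ytil j) with hc
  -- rewrite the function
  have hfun : (fun v : Fin n → ℝ =>
        ∑ j, h j * ∑ i, (ys j i - ytil j) * standardize v i)
      = fun v => (∑ i, c i * (v i - bmean v)) * (bstd v)⁻¹ := by
    funext v
    simp only [standardize, div_eq_mul_inv, Finset.mul_sum, Finset.sum_mul, hc]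
    rw [Finset.sum_comm]
    exact Finset.sum_congr rfl fun i _ => Finset.sum_congr rfl fun j _ => by ring
  -- derivatives
  set P : Fin n → ((Fin n → ℝ) →L[ℝ] ℝ) := fun i => ContinuousLinearMap.proj i with hP
  set M : (Fin n → ℝ) →L[ℝ] ℝ := (n:ℝ)⁻¹ • ∑ i, P i with hM
  have hmean : HasFDerivAt (fun v : Fin n → ℝ => bmean v) M x := by
    have h1 : HasFDerivAt (fun v : Fin n → ℝ => (∑ i, v i) * (n:ℝ)⁻¹)
        ((n:ℝ)⁻¹ • ∑ i, P i) x :=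
      (HasFDerivAt.fun_sum fun i _ => (P i).hasFDerivAt).mul_const _
    simpa only [bmean, div_eq_mul_inv] using h1
  have hB : ∀ i : Fin n, HasFDerivAt (fun v : Fin n → ℝ => v i - bmean v) (P i - M) x :=
    fun i => (P i).hasFDerivAt.sub hmean
  have hN : HasFDerivAt (fun v : Fin n → ℝ => ∑ i, c i * (v i - bmean v))
      (∑ i, c i • (P i - M)) x :=
    HasFDerivAt.fun_sum fun i _ => (hB i).const_mul (c i)
  have hsq : ∀ i : Fin n, HasFDerivAt (fun v : Fin n → ℝ => (v i - bmean v) ^ 2)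
      ((x i - bmean x) • (P i - M) + (x i - bmean x) • (P i - M)) x := by
    intro i
    have : HasFDerivAt (fun v : Fin n → ℝ => (v i - bmean v) * (v i - bmean v)) _ x := (hB i).mul (hB i)
    simpa only [← pow_two] using this
  set Q : (Fin n → ℝ) →L[ℝ] ℝ :=
    (n:ℝ)⁻¹ • ∑ i, ((x i - bmean x) • (P i - M) + (x i - bmean x) • (P i - M)) with hQ
  have hq' : HasFDerivAt (fun v : Fin n → ℝ => (∑ i, (v i - bmean v) ^ 2) / n) Q x := by
    have h1 := (HasFDerivAt.fun_sum fun i (_ : i ∈ Finset.univ) => hsq i).mul_const (n:ℝ)⁻¹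
    simpa only [div_eq_mul_inv] using h1
  have hσder : HasFDerivAt (fun v : Fin n → ℝ => bstd v)
      ((1 / (2 * Real.sqrt ((∑ i, (x i - bmean x) ^ 2) / n))) • Q) x :=
    hq'.sqrt (ne_of_gt hqpos)
  have hinv : HasFDerivAt (fun v : Fin n → ℝ => (bstd v)⁻¹)
      ((-(bstd x ^ 2)⁻¹) • ((1 / (2 * Real.sqrt ((∑ i, (x i - bmean x) ^ 2) / n))) • Q)) x :=
    (hasDerivAt_inv hσ0).comp_hasFDerivAt x hσder
  have hmain := hN.mul hinv
  refine ⟨_, by rw [hfun]; exact hmain, ?_⟩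
  intro w
  simp only [ContinuousLinearMap.add_apply, ContinuousLinearMap.coe_smul',
    Pi.smul_apply, ContinuousLinearMap.coe_sum', Finset.sum_apply,
    ContinuousLinearMap.coe_sub', Pi.sub_apply, ContinuousLinearMap.smul_apply,
    ContinuousLinearMap.sum_apply, ContinuousLinearMap.sub_apply,
    hP, hM, hQ, ContinuousLinearMap.proj_apply, smul_eq_mul]
  rw [show Real.sqrt ((∑ i, (x i - bmean x) ^ 2) / (n:ℝ)) = bstd x from rfl]
  -- basic identities
  have key1 : ∑ i, (x i - bmean x) = 0 := by
    simp only [Finset.sum_sub_distrib, Finset.sum_const, Finset.card_univ,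
      Fintype.card_fin, nsmul_eq_mul, bmean]
    field_simp
    ring
  have key2 : ∑ i, (x i - bmean x) ^ 2 = n * bstd x ^ 2 := by
    have h2 : bstd x ^ 2 = (∑ i, (x i - bmean x) ^ 2) / n := Real.sq_sqrt hqpos.le
    rw [h2]; field_simp
  have keyyd : ∑ i, yd i ^ 2 = (n:ℝ) := by
    show ∑ i, (standardize x i) ^ 2 = (n:ℝ)
    simp only [standardize, div_pow]
    rw [← Finset.sum_div, key2]
    field_simp
  have hnrm : nrm = Real.sqrt n := by
    show Real.sqrt (∑ i, yd i ^ 2) = _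
    rw [keyyd]
  have keynn : (Real.sqrt n)⁻¹ * (Real.sqrt n)⁻¹ = (n:ℝ)⁻¹ := by
    rw [← mul_inv, Real.mul_self_sqrt hnpos.le]
  have keyo : ∀ k, o k = (Real.sqrt n)⁻¹ * ((x k - bmean x) / bstd x) := by
    intro k
    show nrm⁻¹ * yd k = _
    rw [hnrm]
    rfl
  have hS : ∀ j, ∑ k, o k * ys j k
      = (Real.sqrt n)⁻¹ * (bstd x)⁻¹ * ∑ k, (x k - bmean x) * ys j k := by
    intro j
    rw [Finset.mul_sum]
    exact Finset.sum_congr rfl fun k _ => by rw [keyo]; ring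
  have hC : ∑ i, c i = -((n:ℝ) * ∑ j, h j * ytil j) := by
    have hper : ∀ j : Fin D, ∑ i : Fin n, h j * (ys j i - ytil j)
        = (n:ℝ) * (-(h j * ytil j)) := by
      intro j
      rw [← Finset.mul_sum, Finset.sum_sub_distrib, Finset.sum_const, Finset.card_univ,
        Fintype.card_fin, nsmul_eq_mul]
      rcases eq_or_ne j d with rfl | hj
      · rw [hhd]; ring
      · rw [hys j hj]; ring
    calc ∑ i, c i = ∑ j, ∑ i : Fin n, h j * (ys j i - ytil j) := by
          simp only [hc]; exact Finset.sum_comm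
      _ = ∑ j, (n:ℝ) * (-(h j * ytil j)) := Finset.sum_congr rfl fun j _ => hper j
      _ = -((n:ℝ) * ∑ j, h j * ytil j) := by
          rw [← Finset.mul_sum]
          simp [Finset.mul_sum, mul_neg]
  have hci : ∀ i, ∑ j, h j * ys j i = c i + ∑ j, h j * ytil j := by
    intro i
    simp only [hc]
    rw [← Finset.sum_add_distrib]
    exact Finset.sum_congr rfl fun j _ => by ring
  have hCE' : ∑ j, h j * ∑ k, (x k - bmean x) * ys j k
      = ∑ m, c m * (x m - bmean x) := by
    have hj : ∀ j : Fin D, h j * ∑ k, (x k - bmean x) * ys j k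
        = ∑ k, h j * (ys j k - ytil j) * (x k - bmean x) := by
      intro j
      calc h j * ∑ k, (x k - bmean x) * ys j k
          = (∑ k, h j * (ys j k - ytil j) * (x k - bmean x))
            + (h j * ytil j) * ∑ k, (x k - bmean x) := by
            rw [Finset.mul_sum, Finset.mul_sum, ← Finset.sum_add_distrib]
            exact Finset.sum_congr rfl fun k _ => by ring
        _ = ∑ k, h j * (ys j k - ytil j) * (x k - bmean x) := by
            rw [key1, mul_zero, add_zero]
    calc ∑ j, h j * ∑ k, (x k - bmean x) * ys j k
        = ∑ j, ∑ k, h j * (ys j k - ytil j) * (x k - bmean x) :=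
          Finset.sum_congr rfl fun j _ => hj j
      _ = ∑ m, ∑ j, h j * (ys j m - ytil j) * (x m - bmean x) := Finset.sum_comm
      _ = ∑ m, c m * (x m - bmean x) := by
          refine Finset.sum_congr rfl fun m _ => ?_
          simp only [hc]
          rw [Finset.sum_mul]
  -- coefficient identity for the RHS
  have hcoef : ∀ i, 1 / bstd x * ∑ j, h j * (ys j i - (∑ k, o k * ys j k) * o i)
      = (bstd x)⁻¹ * (c i + ∑ j, h j * ytil j)
        - (n:ℝ)⁻¹ * (bstd x ^ 2)⁻¹ * (bstd x)⁻¹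
          * (∑ m, c m * (x m - bmean x)) * (x i - bmean x) := by
    intro i
    have h1 : ∑ j, h j * (ys j i - (∑ k, o k * ys j k) * o i)
        = (∑ j, h j * ys j i)
          - ((Real.sqrt n)⁻¹ * (Real.sqrt n)⁻¹) * ((bstd x)⁻¹ * (bstd x)⁻¹)
            * (x i - bmean x) * (∑ j, h j * ∑ k, (x k - bmean x) * ys j k) := by
      rw [Finset.mul_sum, ← Finset.sum_sub_distrib]
      refine Finset.sum_congr rfl fun j _ => ?_
      rw [hS j, keyo i]
      ring
    rw [h1, keynn, hCE', hci i]
    ring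
  -- linear-in-w sums
  have hQw : ∑ i, ((x i - bmean x) * (w i - (n:ℝ)⁻¹ * ∑ k, w k)
        + (x i - bmean x) * (w i - (n:ℝ)⁻¹ * ∑ k, w k))
      = 2 * ∑ i, (x i - bmean x) * w i := by
    calc ∑ i, ((x i - bmean x) * (w i - (n:ℝ)⁻¹ * ∑ k, w k)
          + (x i - bmean x) * (w i - (n:ℝ)⁻¹ * ∑ k, w k))
        = ∑ i, (2 * ((x i - bmean x) * w i)
            - (2 * ((n:ℝ)⁻¹ * ∑ k, w k)) * (x i - bmean x)) :=
          Finset.sum_congr rfl fun i _ => by ring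
      _ = 2 * ∑ i, (x i - bmean x) * w i := by
          rw [Finset.sum_sub_distrib, ← Finset.mul_sum, ← Finset.mul_sum, key1,
            mul_zero, sub_zero]
  have hcw : ∑ i, c i * (w i - (n:ℝ)⁻¹ * ∑ k, w k)
      = (∑ i, c i * w i) + (∑ k, w k) * ∑ j, h j * ytil j := by
    calc ∑ i, c i * (w i - (n:ℝ)⁻¹ * ∑ k, w k)
        = ∑ i, (c i * w i - ((n:ℝ)⁻¹ * ∑ k, w k) * c i) :=
          Finset.sum_congr rfl fun i _ => by ring
      _ = (∑ i, c i * w i) - ((n:ℝ)⁻¹ * ∑ k, w k) * ∑ i, c i := by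
          rw [Finset.sum_sub_distrib, ← Finset.mul_sum]
      _ = (∑ i, c i * w i) + (∑ k, w k) * ∑ j, h j * ytil j := by
          rw [hC]
          field_simp
          ring
  have hR : (∑ i, (1 / bstd x * ∑ j, h j * (ys j i - (∑ k, o k * ys j k) * o i)) * w i)
      = (bstd x)⁻¹ * (∑ i, c i * w i)
        + ((bstd x)⁻¹ * ∑ j, h j * ytil j) * (∑ k, w k)
        - ((n:ℝ)⁻¹ * (bstd x ^ 2)⁻¹ * (bstd x)⁻¹ * (∑ m, c m * (x m - bmean x)))
          * ∑ i, (x i - bmean x) * w i := by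
    calc ∑ i, (1 / bstd x * ∑ j, h j * (ys j i - (∑ k, o k * ys j k) * o i)) * w i
        = ∑ i, ((bstd x)⁻¹ * (c i * w i)
            + ((bstd x)⁻¹ * ∑ j, h j * ytil j) * w i
            - ((n:ℝ)⁻¹ * (bstd x ^ 2)⁻¹ * (bstd x)⁻¹
                * (∑ m, c m * (x m - bmean x))) * ((x i - bmean x) * w i)) :=
          Finset.sum_congr rfl fun i _ => by rw [hcoef i]; ring
      _ = _ := by
          rw [Finset.sum_sub_distrib, Finset.sum_add_distrib, ← Finset.mul_sum,
            ← Finset.mul_sum, ← Finset.mul_sum]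
  rw [hQw, hcw, hR]
  ring
end

section
/- (Corollary 1, training phase) Let D ≥ 1, n ≥ 2, ỹ ∈ ℝ^D, and let X ∈ ℝ^{D×n} have all rows non-constant, with row-wise standardization Y(X) having columns y^{(i)}. Then: (i) for every g ∈ ℝ^D, the gradient with respect to X of Loss^grad(X; g) = Σ_{i=1}^n (y^{(i)} − ỹ)ᵀg is identically zero, so the mixed second derivative ∂²Loss^grad/∂X∂g is zero; and (ii) for every diagonal matrix H^diag ∈ ℝ^{D×D}, the gradient with respect to X of Loss^diag(X; H^diag) = (1/2)Σ_{i=1}^n (y^{(i)}−ỹ)ᵀH^diag(y^{(i)}−ỹ) is identically zero, so the mixed second derivative ∂²Loss^diag/∂X∂H^diag is zero. -/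
open scoped BigOperators

lemma my_sum_sub_mean {n : ℕ} (hn : n ≠ 0) (x : Fin n → ℝ) :
    ∑ i, (x i - bmean x) = 0 := by
  have hn' : (n : ℝ) ≠ 0 := Nat.cast_ne_zero.2 hn
  simp [Finset.sum_sub_distrib, bmean]
  field_simp
  ring

lemma my_bstd_pos {n : ℕ} (hn : n ≠ 0) {x : Fin n → ℝ} (hx : NonConstant x) :
    0 < bstd x := by
  obtain ⟨i, hi⟩ : ∃ i, x i ≠ bmean x := by
    by_contra h; push_neg at h; exact hx (funext h)
  have hi' : x i - bmean x ≠ 0 := sub_ne_zero.2 hi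
  have hsum : 0 < ∑ j, (x j - bmean x) ^ 2 :=
    Finset.sum_pos' (fun j _ => sq_nonneg _) ⟨i, Finset.mem_univ i, by positivity⟩
  have hn' : (0:ℝ) < n := by positivity
  exact Real.sqrt_pos.2 (by positivity)

lemma my_sum_standardize {n : ℕ} (hn : n ≠ 0) (x : Fin n → ℝ) :
    ∑ i, standardize x i = 0 := by
  simp only [standardize, div_eq_mul_inv, ← Finset.sum_mul, my_sum_sub_mean hn x, zero_mul]

lemma my_sum_sq_standardize {n : ℕ} (hn : n ≠ 0) {x : Fin n → ℝ} (hσ : 0 < bstd x) :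
    ∑ i, (standardize x i) ^ 2 = n := by
  have hn' : (0:ℝ) < n := by positivity
  have h2 : (bstd x) ^ 2 = (∑ i, (x i - bmean x) ^ 2) / n :=
    Real.sq_sqrt (by positivity)
  simp only [standardize, div_pow, ← Finset.sum_div]
  rw [eq_comm, eq_div_iff (by positivity), h2]
  field_simp

lemma my_sum_sq_sub {n : ℕ} (hn : n ≠ 0) {x : Fin n → ℝ} (hσ : 0 < bstd x) (c : ℝ) :
    ∑ i, (standardize x i - c) ^ 2 = n * (1 + c ^ 2) := by
  have h1 := my_sum_standardize hn x
  have h2 := my_sum_sq_standardize hn hσ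
  have : ∀ i, (standardize x i - c) ^ 2
      = (standardize x i) ^ 2 - 2 * c * standardize x i + c ^ 2 := by intro i; ring
  simp only [this, Finset.sum_add_distrib, Finset.sum_sub_distrib, ← Finset.mul_sum,
    h1, h2, Finset.sum_const, Finset.card_univ, Fintype.card_fin, nsmul_eq_mul]
  ring

/-- Corollary 1, training phase: at any `X` with all rows non-constant,
(i) for every `g` the gradient of `Loss^grad(X; g)` with respect to `X` is zero, and
(ii) for every diagonal `H^diag` the gradient of `Loss^diag(X; H^diag)` with respect
to `X` is zero; hence the mixed second derivatives `∂²Loss^grad/∂X∂g` and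
`∂²Loss^diag/∂X∂H^diag` vanish. -/
theorem corollary1_training (D n : ℕ) (hD : 1 ≤ D) (hn : 2 ≤ n)
    (ytil : Fin D → ℝ) (X : Fin D → Fin n → ℝ) (hX : ∀ d, NonConstant (X d)) :
    (∀ g : Fin D → ℝ,
      HasFDerivAt
        (fun Z : Fin D → Fin n → ℝ => ∑ i, ∑ d, (standardize (Z d) i - ytil d) * g d)
        (0 : (Fin D → Fin n → ℝ) →L[ℝ] ℝ) X) ∧
    (∀ Hdiag : Matrix (Fin D) (Fin D) ℝ, Hdiag.IsDiag →
      HasFDerivAt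
        (fun Z : Fin D → Fin n → ℝ =>
          (1 / 2 : ℝ) * ∑ i, ∑ j, ∑ k,
            (standardize (Z j) i - ytil j) * Hdiag j k * (standardize (Z k) i - ytil k))
        (0 : (Fin D → Fin n → ℝ) →L[ℝ] ℝ) X) := by
  have hn0 : n ≠ 0 := by omega
  -- the open set of matrices with all rows having positive bstd
  have hcont : ∀ d : Fin D, Continuous (fun Z : Fin D → Fin n → ℝ => bstd (Z d)) := by
    intro d
    unfold bstd bmean
    fun_prop
  have hopen : IsOpen {Z : Fin D → Fin n → ℝ | ∀ d, 0 < bstd (Z d)} := by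
    have : {Z : Fin D → Fin n → ℝ | ∀ d, 0 < bstd (Z d)}
        = ⋂ d, {Z | 0 < bstd (Z d)} := by ext Z; simp
    rw [this]
    exact isOpen_iInter_of_finite fun d => isOpen_lt continuous_const (hcont d)
  have hmem : X ∈ {Z : Fin D → Fin n → ℝ | ∀ d, 0 < bstd (Z d)} :=
    fun d => my_bstd_pos hn0 (hX d)
  have hnhds : {Z : Fin D → Fin n → ℝ | ∀ d, 0 < bstd (Z d)} ∈ nhds X :=
    hopen.mem_nhds hmem
  constructor
  · intro g
    have heq : (fun Z : Fin D → Fin n → ℝ =>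
        ∑ i, ∑ d, (standardize (Z d) i - ytil d) * g d)
        =ᶠ[nhds X] (fun _ => ∑ d, (0 - (n : ℝ) * ytil d) * g d) := by
      filter_upwards [hnhds] with Z hZ
      rw [Finset.sum_comm]
      refine Finset.sum_congr rfl fun d _ => ?_
      have : ∑ i, (standardize (Z d) i - ytil d) * g d
          = (∑ i, (standardize (Z d) i - ytil d)) * g d := by
        rw [Finset.sum_mul]
      rw [this, Finset.sum_sub_distrib, my_sum_standardize hn0]
      simp [Finset.sum_const, Finset.card_univ, mul_comm]
    exact (hasFDerivAt_const _ _).congr_of_eventuallyEq heq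
  · intro Hdiag hHd
    have heq : (fun Z : Fin D → Fin n → ℝ =>
        (1 / 2 : ℝ) * ∑ i, ∑ j, ∑ k,
          (standardize (Z j) i - ytil j) * Hdiag j k * (standardize (Z k) i - ytil k))
        =ᶠ[nhds X]
        (fun _ => (1 / 2 : ℝ) * ∑ j, Hdiag j j * ((n : ℝ) * (1 + (ytil j) ^ 2))) := by
      filter_upwards [hnhds] with Z hZ
      congr 1
      rw [Finset.sum_comm]
      refine Finset.sum_congr rfl fun j _ => ?_
      have hinner : ∀ i, ∑ k, (standardize (Z j) i - ytil j) * Hdiag j k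
            * (standardize (Z k) i - ytil k)
          = Hdiag j j * (standardize (Z j) i - ytil j) ^ 2 := by
        intro i
        rw [Finset.sum_eq_single j]
        · ring
        · intro k _ hk
          rw [hHd (Ne.symm hk)]  -- Hdiag j k = 0 for j ≠ k
          ring
        · intro h; exact absurd (Finset.mem_univ j) h
      simp only [hinner, ← Finset.mul_sum]
      rw [my_sum_sq_sub hn0 (hZ j)]
    exact (hasFDerivAt_const _ _).congr_of_eventuallyEq heq
end
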